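/- Let V be a real Hilbert space, let V_n be an n-dimensional subspace with orthonormal basis v₁, …, v_n, and let W_m be an m-dimensional subspace with basis ω₁, …, ω_m, where 1 ≤ n ≤ m. Define the Gram matrices A ∈ ℝ^{m×m} with A_{ij} = ⟨ω_i, ω_j⟩ and B ∈ ℝ^{m×n} with B_{is} = ⟨ω_i, v_s⟩, and set M := Bᵀ A⁻¹ B ∈ ℝ^{n×n}. Then A is invertible, M is symmetric positive semidefinite, and β(V_n, W_m)², the square of the inf-sup constant, equals the smallest eigenvalue of M; equivalently, for every coefficient vector c ∈ ℝⁿ with ‖c‖ = 1 and x := Σ_{s=1}^n c_s v_s, one has ‖P_{W_m} x‖² = cᵀ M c, and β(V_n, W_m)² = inf{cᵀ M c : c ∈ ℝⁿ, ‖c‖ = 1}. -/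

import Mathlib

open scoped RealInnerProductSpace Matrix

lemma dot_gram {V : Type*} [NormedAddCommGroup V] [InnerProductSpace ℝ V]
    {k : ℕ} (w : Fin k → V) (G : Matrix (Fin k) (Fin k) ℝ)
    (hG : ∀ i j, G i j = ⟪w i, w j⟫) (c : Fin k → ℝ) :
    c ⬝ᵥ G.mulVec c = ‖∑ i, c i • w i‖ ^ 2 := by
  rw [← real_inner_self_eq_norm_sq]
  simp only [dotProduct, Matrix.mulVec, sum_inner, inner_sum,
    real_inner_smul_left, real_inner_smul_right, Finset.mul_sum]
  refine Finset.sum_congr rfl fun i _ => Finset.sum_congr rfl fun j _ => ?_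
  rw [hG, real_inner_comm]; ring

lemma eu_inner {n : ℕ} (x y : EuclideanSpace ℝ (Fin n)) :
    ⟪x, y⟫ = x ⬝ᵥ y := by
  simp [PiLp.inner_apply, dotProduct, RCLike.inner_apply, mul_comm]

/-- With an orthonormal basis `v` of `V_n` and a basis `ω` of `W_m`
(`1 ≤ n ≤ m`), the Gram matrices `A_{ij} = ⟪ω_i, ω_j⟫`, `B_{is} = ⟪ω_i, v_s⟫` and
`M = Bᵀ A⁻¹ B` satisfy: `A` is invertible, `M` is symmetric positive semidefinite,
`‖P_{W_m}(Σ c_s v_s)‖² = cᵀ M c` for unit vectors `c`, and `β(V_n, W_m)²` equals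
`inf {cᵀ M c : ‖c‖ = 1}`, which is the smallest eigenvalue of `M`. -/
theorem stmt8 {V : Type*} [NormedAddCommGroup V] [InnerProductSpace ℝ V]
    (n m : ℕ) (hn : 1 ≤ n) (hnm : n ≤ m)
    (v : Fin n → V) (ω : Fin m → V)
    (Vn Wm : Submodule ℝ V) [CompleteSpace Wm]
    (hv : Orthonormal ℝ v) (hVn : Vn = Submodule.span ℝ (Set.range v))
    (hω : LinearIndependent ℝ ω) (hWm : Wm = Submodule.span ℝ (Set.range ω))
    (A : Matrix (Fin m) (Fin m) ℝ) (hA : ∀ i j, A i j = ⟪ω i, ω j⟫)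
    (B : Matrix (Fin m) (Fin n) ℝ) (hB : ∀ i s, B i s = ⟪ω i, v s⟫)
    (M : Matrix (Fin n) (Fin n) ℝ) (hM : M = Bᵀ * A⁻¹ * B) :
    IsUnit A.det ∧
    M.PosSemidef ∧
    (∀ c : Fin n → ℝ, (∑ s, (c s) ^ 2 = 1) →
      ‖(Submodule.orthogonalProjectionOnto Wm (∑ s, c s • v s) : V)‖ ^ 2 = c ⬝ᵥ M.mulVec c) ∧
    (sInf {r : ℝ | ∃ x ∈ Vn, x ≠ 0 ∧
        r = ‖(Submodule.orthogonalProjectionOnto Wm x : V)‖ / ‖x‖}) ^ 2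
      = sInf {r : ℝ | ∃ c : Fin n → ℝ, (∑ s, (c s) ^ 2 = 1) ∧ r = c ⬝ᵥ M.mulVec c} ∧
    (∀ hH : M.IsHermitian,
      (sInf {r : ℝ | ∃ x ∈ Vn, x ≠ 0 ∧
          r = ‖(Submodule.orthogonalProjectionOnto Wm x : V)‖ / ‖x‖}) ^ 2
        = ⨅ i, hH.eigenvalues i) := by
  have hAh : A.IsHermitian := by
    ext i j
    simp [Matrix.conjTranspose_apply, hA, real_inner_comm]
  have hApos : A.PosDef := by
    refine Matrix.posDef_iff_dotProduct_mulVec.mpr ⟨hAh, fun x hx => ?_⟩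
    rw [star_trivial, dot_gram ω A hA x]
    have hx0 : ∑ i, x i • ω i ≠ 0 := fun h =>
      hx (funext fun i => Fintype.linearIndependent_iff.mp hω x h i)
    exact pow_pos (norm_pos_iff.mpr hx0) 2
  have hAdet : IsUnit A.det := isUnit_iff_ne_zero.mpr hApos.det_pos.ne'
  -- key
  have key : ∀ c : Fin n → ℝ,
      ‖(Submodule.orthogonalProjectionOnto Wm (∑ s, c s • v s) : V)‖ ^ 2 = c ⬝ᵥ M.mulVec c := by
    intro c
    set x := ∑ s, c s • v s with hx
    set d := A⁻¹ *ᵥ (B *ᵥ c) with hd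
    set p := ∑ i, d i • ω i with hp
    have hpW : p ∈ Wm := by
      rw [hWm]
      exact Submodule.sum_mem _ fun i _ =>
        Submodule.smul_mem _ _ (Submodule.subset_span ⟨i, rfl⟩)
    have hAd : A *ᵥ d = B *ᵥ c := by
      rw [hd, Matrix.mulVec_mulVec, Matrix.mul_nonsing_inv A hAdet, Matrix.one_mulVec]
    have horto : ∀ j, ⟪ω j, x - p⟫ = 0 := by
      intro j
      have h1 : ⟪ω j, x⟫ = (B *ᵥ c) j := by
        simp only [hx, inner_sum, real_inner_smul_right, Matrix.mulVec, dotProduct]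
        exact Finset.sum_congr rfl fun s _ => by rw [hB]; ring
      have h2 : ⟪ω j, p⟫ = (A *ᵥ d) j := by
        simp only [hp, inner_sum, real_inner_smul_right, Matrix.mulVec, dotProduct]
        exact Finset.sum_congr rfl fun i _ => by rw [hA]; ring
      rw [inner_sub_right, h1, h2, hAd, sub_self]
    have hproj : (Submodule.orthogonalProjectionOnto Wm x : V) = p := by
      apply Submodule.eq_starProjection_of_mem_of_inner_eq_zero hpW
      intro w hw
      rw [hWm] at hw
      induction hw using Submodule.span_induction with
      | mem y hy =>
        obtain ⟨j, rfl⟩ := hy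
        rw [real_inner_comm]; exact horto j
      | zero => exact inner_zero_right _
      | add y z _ _ hy hz => rw [inner_add_right, hy, hz, add_zero]
      | smul r y _ hy => rw [real_inner_smul_right, hy, mul_zero]
    have hMc : M.mulVec c = Bᵀ *ᵥ d := by
      rw [hM, hd, ← Matrix.mulVec_mulVec, ← Matrix.mulVec_mulVec]
    rw [hproj, ← dot_gram ω A hA d, hAd, hMc, Matrix.dotProduct_mulVec c,
      Matrix.vecMul_transpose, dotProduct_comm]
  have hBT : Bᴴ = Bᵀ := by ext i j; simp [Matrix.conjTranspose_apply]
  have hMh : M.IsHermitian := by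
    rw [hM, ← hBT]
    exact Matrix.isHermitian_conjTranspose_mul_mul B hAh.inv
  have hMpsd : M.PosSemidef := by
    refine Matrix.posSemidef_iff_dotProduct_mulVec.mpr ⟨hMh, fun x => ?_⟩
    rw [star_trivial, ← key x]
    positivity
  -- norms of combinations of v
  have hnorm : ∀ c : Fin n → ℝ, ‖∑ s, c s • v s‖ ^ 2 = ∑ s, (c s) ^ 2 := by
    intro c
    rw [← real_inner_self_eq_norm_sq, hv.inner_sum]
    simp [sq]
  set S : Set ℝ := {r : ℝ | ∃ x ∈ Vn, x ≠ 0 ∧ r = ‖(Submodule.orthogonalProjectionOnto Wm x : V)‖ / ‖x‖} with hSdef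
  set T : Set ℝ := {r : ℝ | ∃ c : Fin n → ℝ, (∑ s, (c s) ^ 2 = 1) ∧ r = c ⬝ᵥ M.mulVec c} with hTdef
  have hS0 : ∀ r ∈ S, 0 ≤ r := by
    rintro r ⟨x, -, -, rfl⟩
    positivity
  have i0 : Fin n := ⟨0, hn⟩
  have hSne : S.Nonempty := by
    refine ⟨_, v i0, ?_, hv.ne_zero i0, rfl⟩
    rw [hVn]; exact Submodule.subset_span ⟨i0, rfl⟩
  have hmemVn : ∀ c : Fin n → ℝ, (∑ s, c s • v s) ∈ Vn := by
    intro c; rw [hVn]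
    exact Submodule.sum_mem _ fun s _ => Submodule.smul_mem _ _ (Submodule.subset_span ⟨s, rfl⟩)
  have hTS : T = (fun r => r * |r|) '' S := by
    ext r
    constructor
    · rintro ⟨c, hc1, rfl⟩
      have hx2 : ‖∑ s, c s • v s‖ ^ 2 = 1 := by rw [hnorm c, hc1]
      have hx1 : ‖∑ s, c s • v s‖ = 1 := by nlinarith [norm_nonneg (∑ s, c s • v s)]
      have hxne : (∑ s, c s • v s) ≠ 0 := by
        intro h; rw [h, norm_zero] at hx1; norm_num at hx1
      refine ⟨_, ⟨∑ s, c s • v s, hmemVn c, hxne, rfl⟩, ?_⟩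
      dsimp only
      rw [hx1, div_one, abs_of_nonneg (norm_nonneg _), ← sq, key c]
    · rintro ⟨r, ⟨x, hxV, hxne, rfl⟩, rfl⟩
      rw [hVn] at hxV
      obtain ⟨c, rfl⟩ := (Submodule.mem_span_range_iff_exists_fun ℝ).mp hxV
      set x := ∑ s, c s • v s with hxdef
      have ht : (0:ℝ) < ‖x‖ := norm_pos_iff.mpr hxne
      set t := ‖x‖ with htdef
      refine ⟨fun s => c s / t, ?_, ?_⟩
      · have : ∑ s, (c s / t) ^ 2 = (∑ s, (c s) ^ 2) / t ^ 2 := by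
          rw [Finset.sum_div]
          exact Finset.sum_congr rfl fun s _ => div_pow _ _ _
        rw [this, ← hnorm c, ← hxdef, ← htdef, div_self (by positivity)]
      · dsimp only
        rw [← key]
        have hsum : ∑ s, (c s / t) • v s = t⁻¹ • x := by
          rw [hxdef, Finset.smul_sum]
          exact Finset.sum_congr rfl fun s _ => by rw [smul_smul, div_eq_inv_mul]
        rw [hsum, map_smul, Submodule.coe_smul, norm_smul, Real.norm_eq_abs,
          abs_of_pos (inv_pos.mpr ht), abs_of_nonneg (div_nonneg (norm_nonneg _) ht.le)]
        simp only [div_eq_inv_mul]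
        ring
  have hmono : Monotone fun r : ℝ => r * |r| := by
    intro a b hab
    dsimp only
    rcases le_total 0 a with ha | ha
    · rw [abs_of_nonneg ha, abs_of_nonneg (ha.trans hab)]; nlinarith
    · rcases le_total 0 b with hb | hb
      · rw [abs_of_nonpos ha, abs_of_nonneg hb]; nlinarith
      · rw [abs_of_nonpos ha, abs_of_nonpos hb]; nlinarith
  have h4 : (sInf S) ^ 2 = sInf T := by
    have hcont : ContinuousAt (fun r : ℝ => r * |r|) (sInf S) :=
      (continuous_id.mul continuous_abs).continuousAt
    rw [hTS, ← hmono.map_csInf_of_continuousAt hcont hSne ⟨0, hS0⟩]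
    have h0 : 0 ≤ sInf S := le_csInf hSne hS0
    rw [abs_of_nonneg h0, ← sq]
  haveI : Nonempty (Fin n) := ⟨i0⟩
  have h5 : ∀ hH : M.IsHermitian, sInf T = ⨅ i, hH.eigenvalues i := by
    intro hH
    set b := hH.eigenvectorBasis with hbdef
    set lam := hH.eigenvalues with hlamdef
    have hMT : Mᵀ = M := by
      ext i j
      simpa [Matrix.conjTranspose_apply] using (congrFun (congrFun hH.eq j) i).symm
    have hbev : ∀ i, M.mulVec (b i) = lam i • (b i) := fun i => hH.mulVec_eigenvectorBasis i
    have hsq : ∀ x : EuclideanSpace ℝ (Fin n), ∑ s, (x s) ^ 2 = ‖x‖ ^ 2 := by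
      intro x
      rw [← real_inner_self_eq_norm_sq, eu_inner]
      simp [dotProduct, sq]
    have hunit : ∀ i, ∑ s, (b i s) ^ 2 = 1 := by
      intro i
      rw [hsq (b i), b.orthonormal.1 i, one_pow]
    have hmem : ∀ i, lam i ∈ T := by
      intro i
      refine ⟨fun s => b i s, hunit i, ?_⟩
      have h1 : (fun s => b i s) ⬝ᵥ M.mulVec (fun s => b i s) = ∑ s, b i s * (lam i * b i s) := by
        rw [show M.mulVec (fun s => b i s) = lam i • b i from hbev i]
        rfl
      rw [h1]
      have h2 : ∑ s, b i s * (lam i * b i s) = lam i * ∑ s, (b i s) ^ 2 := by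
        rw [Finset.mul_sum]
        exact Finset.sum_congr rfl fun s _ => by ring
      rw [h2, hunit i, mul_one]
    have hlow : ∀ r ∈ T, (⨅ i, lam i) ≤ r := by
      rintro r ⟨c, hc1, rfl⟩
      set c' : EuclideanSpace ℝ (Fin n) := WithLp.toLp 2 c with hc'
      set Mc : EuclideanSpace ℝ (Fin n) := WithLp.toLp 2 (M.mulVec c) with hMc
      have e1 : ∀ i, (b i : EuclideanSpace ℝ (Fin n)) ⬝ᵥ Mc = lam i * ((b i : EuclideanSpace ℝ (Fin n)) ⬝ᵥ c') := by
        intro i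
        have step : (b i : EuclideanSpace ℝ (Fin n)) ⬝ᵥ Mc = (M.mulVec (b i)) ⬝ᵥ c' := by
          rw [hMc]
          conv_lhs => rw [Matrix.dotProduct_mulVec, ← hMT, Matrix.vecMul_transpose]
        rw [step, hbev i]
        have : (lam i • ((b i : EuclideanSpace ℝ (Fin n)) : Fin n → ℝ)) ⬝ᵥ c' = ∑ s, lam i * b i s * c' s := rfl
        rw [this, dotProduct, Finset.mul_sum]
        exact Finset.sum_congr rfl fun s _ => by ring
      have h := b.sum_inner_mul_inner c' Mc
      have hp := b.sum_inner_mul_inner c' c'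
      simp only [eu_inner] at h hp
      have hp1 : ∑ i, ((b i : EuclideanSpace ℝ (Fin n)) ⬝ᵥ c') ^ 2 = 1 := by
        have : ∀ i, c' ⬝ᵥ (b i : EuclideanSpace ℝ (Fin n)) * ((b i : EuclideanSpace ℝ (Fin n)) ⬝ᵥ c')
            = ((b i : EuclideanSpace ℝ (Fin n)) ⬝ᵥ c') ^ 2 := fun i => by
          rw [dotProduct_comm]; ring
        rw [← Finset.sum_congr rfl fun i _ => this i, hp]
        have : c' ⬝ᵥ c' = ∑ s, (c s) ^ 2 :=
          Finset.sum_congr rfl fun s _ => (sq (c s)).symm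
        rw [this, hc1]
      have hmain : c ⬝ᵥ M.mulVec c = ∑ i, lam i * ((b i : EuclideanSpace ℝ (Fin n)) ⬝ᵥ c') ^ 2 := by
        have : ∀ i, c' ⬝ᵥ (b i : EuclideanSpace ℝ (Fin n)) * ((b i : EuclideanSpace ℝ (Fin n)) ⬝ᵥ Mc)
            = lam i * ((b i : EuclideanSpace ℝ (Fin n)) ⬝ᵥ c') ^ 2 := fun i => by
          rw [e1 i, dotProduct_comm]; ring
        rw [← Finset.sum_congr rfl fun i _ => this i, h]
      rw [hmain]
      calc (⨅ i, lam i) = ∑ i, (⨅ j, lam j) * ((b i : EuclideanSpace ℝ (Fin n)) ⬝ᵥ c') ^ 2 := by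
            rw [← Finset.mul_sum, hp1, mul_one]
        _ ≤ ∑ i, lam i * ((b i : EuclideanSpace ℝ (Fin n)) ⬝ᵥ c') ^ 2 :=
            Finset.sum_le_sum fun i _ => mul_le_mul_of_nonneg_right
              (ciInf_le (Finite.bddBelow_range _) i) (sq_nonneg _)
    obtain ⟨j0, hj0⟩ := Finite.exists_min lam
    have hinf : ⨅ i, lam i = lam j0 :=
      le_antisymm (ciInf_le (Finite.bddBelow_range _) j0) (le_ciInf hj0)
    apply le_antisymm
    · rw [hinf]
      exact csInf_le ⟨⨅ i, lam i, fun r hr => hlow r hr⟩ (hmem j0)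
    · exact le_csInf ⟨lam j0, hmem j0⟩ hlow
  exact ⟨hAdet, hMpsd, fun c _ => key c, h4, fun hH => h4.trans (h5 hH)⟩
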